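/- For a strictly concave increasing function f and energies S_i ≥ 0, the 'waterfilling' problem of maximizing ∑_{i=1}^N f(q_i) subject only to cumulative causality ∑_{i=1}^j q_i ≤ ∑_{i=1}^j S_i for all j and q_i ≥ 0 has a unique optimal solution, and this optimal solution q̂ satisfies q̂_i ≤ q̂_{i+1} for all i (water levels are nondecreasing over time). -/

import Mathlib

open Finset Filter

namespace WF


variable {N : ℕ}

def Feas (S q : Fin N → ℝ) : Prop :=
  (∀ i, 0 ≤ q i) ∧ ∀ j : Fin N, ∑ i ∈ Iic j, q i ≤ ∑ i ∈ Iic j, S i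

/-- move amount `d` from coordinate `i` to coordinate `j` -/
def mv (q : Fin N → ℝ) (i j : Fin N) (d : ℝ) : Fin N → ℝ :=
  fun k => q k + (if k = j then d else 0) - (if k = i then d else 0)

/-- add amount `d` at coordinate `i` -/
def av (q : Fin N → ℝ) (i : Fin N) (d : ℝ) : Fin N → ℝ :=
  fun k => q k + (if k = i then d else 0)

lemma sum_mv (q : Fin N → ℝ) (i j : Fin N) (d : ℝ) (s : Finset (Fin N)) :
    ∑ k ∈ s, mv q i j d k =
      ∑ k ∈ s, q k + (if j ∈ s then d else 0) - (if i ∈ s then d else 0) := by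
  simp [mv, Finset.sum_add_distrib, Finset.sum_sub_distrib, Finset.sum_ite_eq']

lemma sum_av (q : Fin N → ℝ) (i : Fin N) (d : ℝ) (s : Finset (Fin N)) :
    ∑ k ∈ s, av q i d k = ∑ k ∈ s, q k + (if i ∈ s then d else 0) := by
  simp [av, Finset.sum_add_distrib, Finset.sum_ite_eq']

lemma sum_comp_mv (φ : ℝ → ℝ) (q : Fin N → ℝ) {i j : Fin N} (hij : i ≠ j) (d : ℝ) :
    ∑ k, φ (mv q i j d k) =
      ∑ k, φ (q k) + (φ (q i - d) - φ (q i)) + (φ (q j + d) - φ (q j)) := by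
  have h : ∀ k, φ (mv q i j d k) = φ (q k)
      + (if k = i then φ (q i - d) - φ (q i) else 0)
      + (if k = j then φ (q j + d) - φ (q j) else 0) := by
    intro k
    by_cases hki : k = i
    · subst hki; simp [mv, hij]
    · by_cases hkj : k = j
      · subst hkj; simp [mv, hki, Ne.symm hij]
      · simp [mv, hki, hkj]
  simp only [h]
  simp [Finset.sum_add_distrib, Finset.sum_ite_eq']

lemma sum_comp_av (φ : ℝ → ℝ) (q : Fin N → ℝ) (i : Fin N) (d : ℝ) :
    ∑ k, φ (av q i d k) = ∑ k, φ (q k) + (φ (q i + d) - φ (q i)) := by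
  have h : ∀ k, φ (av q i d k) = φ (q k)
      + (if k = i then φ (q i + d) - φ (q i) else 0) := by
    intro k
    by_cases hki : k = i
    · subst hki; simp [av]
    · simp [av, hki]
  simp only [h]
  simp [Finset.sum_add_distrib, Finset.sum_ite_eq']

lemma mono_of_opt {n : ℕ} (S : Fin (n+1) → ℝ) (φ : ℝ → ℝ)
    (hφ : StrictConcaveOn ℝ (Set.Ici 0) φ)
    (q : Fin (n+1) → ℝ) (hq : Feas S q)
    (hopt : ∀ q', Feas S q' → ∑ i, φ (q' i) ≤ ∑ i, φ (q i)) :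
    Monotone q := by
  rw [Fin.monotone_iff_le_succ]
  intro i
  by_contra hlt
  push_neg at hlt
  have hb : (0:ℝ) ≤ q i.succ := hq.1 _
  have ha : (0:ℝ) ≤ q i.castSucc := hq.1 _
  set a := q i.castSucc with hadef
  set b := q i.succ with hbdef
  set d : ℝ := (a - b) / 2 with hd
  have hd0 : 0 < d := by simp only [hd]; linarith
  have hne : i.castSucc ≠ i.succ := (Fin.castSucc_lt_succ : i.castSucc < i.succ).ne
  set q' := mv q i.castSucc i.succ d with hq'
  have hfeas : Feas S q' := by
    constructor
    · intro k
      by_cases h1 : k = i.castSucc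
      · subst h1
        simp [hq', mv, hne, ← hadef]
        linarith
      · by_cases h2 : k = i.succ
        · subst h2
          simp [hq', mv, Ne.symm hne, ← hbdef]
          linarith
        · simp only [hq', mv, if_neg h1, if_neg h2]
          simpa using hq.1 k
    · intro j
      rw [hq', sum_mv]
      rcases le_or_gt i.succ j with h | h
      · have h2 : i.castSucc ≤ j := le_trans (Fin.castSucc_lt_succ : i.castSucc < i.succ).le h
        simp only [Finset.mem_Iic, if_pos h, if_pos h2]
        have := hq.2 j
        linarith
      · by_cases h2 : i.castSucc ≤ j
        · simp only [Finset.mem_Iic, if_neg h.not_ge, if_pos h2]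
          have := hq.2 j
          linarith
        · simp only [Finset.mem_Iic, if_neg h.not_ge, if_neg h2]
          have := hq.2 j
          linarith
  have hmid : φ a + φ b < 2 * φ ((a + b) / 2) := by
    have := hφ.2 (Set.mem_Ici.2 ha) (Set.mem_Ici.2 hb) (by intro h; rw [h] at hlt; exact lt_irrefl _ hlt)
      (one_half_pos) (one_half_pos) (by norm_num)
    simp only [smul_eq_mul] at this
    have heq : (1/2 : ℝ) * a + (1/2 : ℝ) * b = (a + b)/2 := by ring
    rw [heq] at this
    linarith
  have hobj : ∑ k, φ (q k) < ∑ k, φ (q' k) := by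
    rw [hq', sum_comp_mv φ q hne d]
    have e1 : a - d = (a + b) / 2 := by rw [hd]; ring
    have e2 : b + d = (a + b) / 2 := by rw [hd]; ring
    rw [← hadef, ← hbdef, e1, e2]
    linarith
  exact absurd (hopt q' hfeas) (not_le.2 hobj)

lemma opt_unique (S : Fin N → ℝ) (f : ℝ → ℝ)
    (hconc : StrictConcaveOn ℝ (Set.Ici 0) f)
    (q1 q2 : Fin N → ℝ) (h1 : Feas S q1) (h2 : Feas S q2)
    (o1 : ∀ q', Feas S q' → ∑ i, f (q' i) ≤ ∑ i, f (q1 i))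
    (o2 : ∀ q', Feas S q' → ∑ i, f (q' i) ≤ ∑ i, f (q2 i)) : q1 = q2 := by
  by_contra hne
  obtain ⟨i0, hi0⟩ : ∃ i, q1 i ≠ q2 i := by
    by_contra h; push_neg at h; exact hne (funext h)
  set m := fun k => (q1 k + q2 k)/2 with hm
  have hmf : Feas S m := by
    constructor
    · intro i
      have := h1.1 i; have := h2.1 i
      simp only [hm]; linarith
    · intro j
      have e : ∑ i ∈ Iic j, m i = (∑ i ∈ Iic j, q1 i + ∑ i ∈ Iic j, q2 i)/2 := by
        rw [← Finset.sum_add_distrib, ← Finset.sum_div]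
      rw [e]
      have := h1.2 j; have := h2.2 j
      linarith
  have hv : ∑ i, f (q1 i) = ∑ i, f (q2 i) := le_antisymm (o2 q1 h1) (o1 q2 h2)
  have hlt : ∑ i, f (q1 i) < ∑ i, f (m i) := by
    have hstep : ∑ i, (f (q1 i) + f (q2 i))/2 < ∑ i, f (m i) := by
      apply Finset.sum_lt_sum
      · intro i _
        have := hconc.concaveOn.2 (Set.mem_Ici.2 (h1.1 i)) (Set.mem_Ici.2 (h2.1 i))
          (le_of_lt one_half_pos) (le_of_lt one_half_pos) (by norm_num : (1/2:ℝ) + 1/2 = 1)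
        simp only [smul_eq_mul] at this
        have heq : (1/2:ℝ) * q1 i + (1/2:ℝ) * q2 i = m i := by simp only [hm]; ring
        rw [heq] at this
        linarith
      · refine ⟨i0, Finset.mem_univ _, ?_⟩
        have := hconc.2 (Set.mem_Ici.2 (h1.1 i0)) (Set.mem_Ici.2 (h2.1 i0)) hi0
          (one_half_pos) (one_half_pos) (by norm_num)
        simp only [smul_eq_mul] at this
        have heq : (1/2:ℝ) * q1 i0 + (1/2:ℝ) * q2 i0 = m i0 := by simp only [hm]; ring
        rw [heq] at this
        linarith
    have e : ∑ i, (f (q1 i) + f (q2 i))/2 = (∑ i, f (q1 i) + ∑ i, f (q2 i))/2 := by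
      rw [← Finset.sum_add_distrib, ← Finset.sum_div]
    rw [e, ← hv] at hstep
    linarith
  exact absurd (o1 m hmf) (not_le.2 hlt)



/-- strict concavity from concavity plus strict midpoint inequality -/
lemma strictConcaveOn_of_mid {s : Set ℝ} (hs : Convex ℝ s) (g : ℝ → ℝ)
    (hcc : ConcaveOn ℝ s g)
    (hmid : ∀ x ∈ s, ∀ y ∈ s, x ≠ y → g x + g y < 2 * g ((x + y) / 2)) :
    StrictConcaveOn ℝ s g := by
  apply LinearOrder.strictConcaveOn_of_lt hs
  intro x hx y hy hxy a b ha hb hab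
  simp only [smul_eq_mul]
  have hc : 0 < y - x := by linarith
  set z := a * x + b * y with hz
  have hyz : y - z = a * (y - x) := by rw [hz]; linear_combination (-y) * hab
  have hzx : z - x = b * (y - x) := by rw [hz]; linear_combination x * hab
  set m := min a b * (y - x) / 2 with hm
  have hmin : 0 < min a b := lt_min ha hb
  have hm0 : 0 < m := by rw [hm]; positivity
  have hmlea : m ≤ a * (y - x) / 2 := by
    rw [hm]; have : min a b ≤ a := min_le_left _ _; nlinarith
  have hmleb : m ≤ b * (y - x) / 2 := by
    rw [hm]; have : min a b ≤ b := min_le_right _ _; nlinarith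
  set u := z - m with hu
  set v := z + m with hv
  have hxu : x ≤ u := by rw [hu]; nlinarith
  have hvy : v ≤ y := by rw [hv]; nlinarith
  have huv : u < v := by rw [hu, hv]; linarith
  have huy : u ≤ y := le_trans (le_of_lt huv) hvy
  have hxv : x ≤ v := le_trans hxu (le_of_lt huv)
  have hus : u ∈ s := hs.ordConnected.out hx hy ⟨hxu, huy⟩
  have hvs : v ∈ s := hs.ordConnected.out hx hy ⟨hxv, hvy⟩
  have chord : ∀ w : ℝ, x ≤ w → w ≤ y →
      (y - w) / (y - x) * g x + (w - x) / (y - x) * g y ≤ g w := by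
    intro w hxw hwy
    have hα : (0:ℝ) ≤ (y - w) / (y - x) := by
      apply div_nonneg <;> linarith
    have hβ : (0:ℝ) ≤ (w - x) / (y - x) := by
      apply div_nonneg <;> linarith
    have hαβ : (y - w) / (y - x) + (w - x) / (y - x) = 1 := by
      field_simp
      ring
    have hcomb : (y - w) / (y - x) * x + (w - x) / (y - x) * y = w := by
      field_simp; ring
    have := hcc.2 hx hy hα hβ hαβ
    simp only [smul_eq_mul] at this
    rwa [hcomb] at this
  have h1 := chord u hxu huy
  have h2 := chord v hxv hvy
  have h3 : g u + g v < 2 * g z := by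
    have := hmid u hus v hvs (ne_of_lt huv)
    have he : (u + v) / 2 = z := by rw [hu, hv]; ring
    rwa [he] at this
  have e1 : (y - u) / (y - x) + (y - v) / (y - x) = 2 * a := by
    rw [hu, hv]; field_simp; linear_combination 2 * hyz
  have e2 : (u - x) / (y - x) + (v - x) / (y - x) = 2 * b := by
    rw [hu, hv]; field_simp; linear_combination 2 * hzx
  have hsum : (y - u) / (y - x) * g x + (u - x) / (y - x) * g y
      + ((y - v) / (y - x) * g x + (v - x) / (y - x) * g y)
      = 2 * a * g x + 2 * b * g y := by
    linear_combination g x * e1 + g y * e2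
  linarith

variable (f : ℝ → ℝ)

noncomputable def L : ℝ := sInf (f '' Set.Ioi 0)

noncomputable def g : ℝ → ℝ := fun x => if x ≤ 0 then L f else f x

variable {f}

lemma g_pos {x : ℝ} (hx : 0 < x) : g f x = f x := if_neg (not_le.2 hx)

lemma g_zero : g f 0 = L f := if_pos le_rfl

lemma img_ne : (f '' Set.Ioi 0).Nonempty := ⟨f 1, ⟨1, Set.mem_Ioi.2 one_pos, rfl⟩⟩

lemma bddBelow_img (hmono : StrictMonoOn f (Set.Ici 0)) : BddBelow (f '' Set.Ioi 0) := by
  refine ⟨f 0, ?_⟩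
  rintro y ⟨x, hx, rfl⟩
  exact (hmono (Set.mem_Ici.2 le_rfl) (Set.mem_Ici.2 (le_of_lt hx)) hx).le

lemma L_le (hmono : StrictMonoOn f (Set.Ici 0)) {x : ℝ} (hx : 0 < x) : L f ≤ f x :=
  csInf_le (bddBelow_img hmono) ⟨x, hx, rfl⟩

lemma f0_le_L (hmono : StrictMonoOn f (Set.Ici 0)) : f 0 ≤ L f := by
  refine le_csInf img_ne ?_
  rintro y ⟨x, hx, rfl⟩
  exact (hmono (Set.mem_Ici.2 le_rfl) (Set.mem_Ici.2 (le_of_lt hx)) hx).le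

lemma f_le_g (hmono : StrictMonoOn f (Set.Ici 0)) {x : ℝ} (hx : 0 ≤ x) : f x ≤ g f x := by
  rcases eq_or_lt_of_le hx with rfl | h
  · rw [g_zero]; exact f0_le_L hmono
  · rw [g_pos h]

lemma g_zero_lt (hmono : StrictMonoOn f (Set.Ici 0)) {x : ℝ} (hx : 0 < x) :
    g f 0 < g f x := by
  rw [g_zero, g_pos hx]
  calc L f ≤ f (x/2) := L_le hmono (by linarith)
    _ < f x := hmono (Set.mem_Ici.2 (by linarith)) (Set.mem_Ici.2 hx.le) (by linarith)

lemma fcontOn (hconc : StrictConcaveOn ℝ (Set.Ici 0) f) : ContinuousOn f (Set.Ioi 0) :=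
  ((hconc.concaveOn).subset Set.Ioi_subset_Ici_self (convex_Ioi 0)).continuousOn isOpen_Ioi

lemma gconc (hconc : StrictConcaveOn ℝ (Set.Ici 0) f) (hmono : StrictMonoOn f (Set.Ici 0)) :
    ConcaveOn ℝ (Set.Ici 0) (g f) := by
  apply LinearOrder.concaveOn_of_lt (convex_Ici 0)
  intro x hx y hy hxy a b ha hb hab
  simp only [smul_eq_mul]
  have hx' : (0:ℝ) ≤ x := hx
  have hy0 : 0 < y := lt_of_le_of_lt hx' hxy
  rcases eq_or_lt_of_le hx' with rfl | h0
  · have hby : 0 < b * y := by positivity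
    rw [g_zero, g_pos hy0, show a*0 + b*y = b*y by ring, g_pos hby]
    have cont : ContinuousAt f (b*y) := (fcontOn hconc).continuousAt (isOpen_Ioi.mem_nhds hby)
    have tendsto1 : Tendsto (fun s : ℝ => a*s + b*y) (nhdsWithin 0 (Set.Ioi 0)) (nhds (b*y)) := by
      have h := ((continuous_const.mul continuous_id).add continuous_const).tendsto (0:ℝ)
        (f := fun s : ℝ => a*s + b*y)
      simpa using h.mono_left nhdsWithin_le_nhds
    have tend : Tendsto (fun s : ℝ => f (a*s + b*y)) (nhdsWithin 0 (Set.Ioi 0)) (nhds (f (b*y))) :=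
      (cont.tendsto).comp tendsto1
    refine ge_of_tendsto tend ?_
    filter_upwards [self_mem_nhdsWithin] with s hs
    have hs0 : 0 < s := hs
    have hcc := hconc.concaveOn.2 (Set.mem_Ici.2 hs0.le) (Set.mem_Ici.2 hy0.le) ha.le hb.le hab
    simp only [smul_eq_mul] at hcc
    have hLs : L f ≤ f s := L_le hmono hs0
    have := mul_le_mul_of_nonneg_left hLs ha.le
    linarith
  · have hax : 0 < a*x + b*y := by positivity
    rw [g_pos h0, g_pos hy0, g_pos hax]
    have := hconc.concaveOn.2 (Set.mem_Ici.2 h0.le) (Set.mem_Ici.2 hy0.le) ha.le hb.le hab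
    simpa [smul_eq_mul] using this

lemma gmid (hconc : StrictConcaveOn ℝ (Set.Ici 0) f) (hmono : StrictMonoOn f (Set.Ici 0)) :
    ∀ x ∈ Set.Ici (0:ℝ), ∀ y ∈ Set.Ici (0:ℝ), x ≠ y →
      g f x + g f y < 2 * g f ((x + y) / 2) := by
  have aux : ∀ x y : ℝ, 0 ≤ x → x < y → g f x + g f y < 2 * g f ((x+y)/2) := by
    intro x y hx hxy
    rcases eq_or_lt_of_le hx with rfl | hx0
    · have hy0 : 0 < y := hxy
      rw [g_zero, show (0+y)/2 = y/2 by ring, g_pos hy0, g_pos (by linarith : (0:ℝ) < y/2)]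
      have h1 : (L f + f (y/2))/2 ≤ f (y/4) := by
        have h := (gconc hconc hmono).2 (Set.mem_Ici.2 le_rfl)
          (Set.mem_Ici.2 (by linarith : (0:ℝ) ≤ y/2)) (le_of_lt one_half_pos)
          (le_of_lt one_half_pos) (by norm_num)
        simp only [smul_eq_mul] at h
        rw [show (1/2:ℝ) * 0 + (1/2:ℝ) * (y/2) = y/4 by ring] at h
        rw [g_zero, g_pos (by linarith : (0:ℝ) < y/2), g_pos (by linarith : (0:ℝ) < y/4)] at h
        linarith
      have h2 : (f (y/2) + f y)/2 ≤ f (3*y/4) := by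
        have h := hconc.concaveOn.2 (Set.mem_Ici.2 (by linarith : (0:ℝ) ≤ y/2))
          (Set.mem_Ici.2 hy0.le) (le_of_lt one_half_pos) (le_of_lt one_half_pos) (by norm_num)
        simp only [smul_eq_mul] at h
        rw [show (1/2:ℝ) * (y/2) + (1/2:ℝ) * y = 3*y/4 by ring] at h
        linarith
      have h3 : (f (y/4) + f (3*y/4))/2 < f (y/2) := by
        have h := hconc.2 (Set.mem_Ici.2 (by linarith : (0:ℝ) ≤ y/4))
          (Set.mem_Ici.2 (by linarith : (0:ℝ) ≤ 3*y/4))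
          (by intro he; nlinarith) one_half_pos one_half_pos (by norm_num)
        simp only [smul_eq_mul] at h
        rw [show (1/2:ℝ) * (y/4) + (1/2:ℝ) * (3*y/4) = y/2 by ring] at h
        linarith
      linarith
    · have hy0 : 0 < y := lt_trans hx0 hxy
      have hm0 : 0 < (x+y)/2 := by linarith
      rw [g_pos hx0, g_pos hy0, g_pos hm0]
      have h := hconc.2 (Set.mem_Ici.2 hx0.le) (Set.mem_Ici.2 hy0.le) (ne_of_lt hxy)
        one_half_pos one_half_pos (by norm_num)
      simp only [smul_eq_mul] at h
      rw [show (1/2:ℝ) * x + (1/2:ℝ) * y = (x+y)/2 by ring] at h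
      linarith
  intro x hx y hy hne
  rcases lt_or_gt_of_ne hne with h | h
  · exact aux x y hx h
  · have := aux y x hy h
    rw [show (y+x)/2 = (x+y)/2 by ring] at this
    linarith

lemma gstrict (hconc : StrictConcaveOn ℝ (Set.Ici 0) f) (hmono : StrictMonoOn f (Set.Ici 0)) :
    StrictConcaveOn ℝ (Set.Ici 0) (g f) :=
  strictConcaveOn_of_mid (convex_Ici 0) _ (gconc hconc hmono) (gmid hconc hmono)

lemma gcont (hconc : StrictConcaveOn ℝ (Set.Ici 0) f) (hmono : StrictMonoOn f (Set.Ici 0)) :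
    ContinuousOn (g f) (Set.Ici 0) := by
  intro x hx
  have hx' : (0:ℝ) ≤ x := hx
  rcases eq_or_lt_of_le hx' with rfl | hx0
  · have ht : Tendsto (g f) (nhdsWithin 0 (Set.Ici 0)) (nhds (L f)) := by
      rw [tendsto_order]
      constructor
      · intro c hc
        filter_upwards [self_mem_nhdsWithin] with s hs
        have hs' : (0:ℝ) ≤ s := hs
        have : L f ≤ g f s := by
          rcases eq_or_lt_of_le hs' with rfl | h
          · rw [g_zero]
          · rw [g_pos h]; exact L_le hmono h
        linarith
      · intro c hc
        obtain ⟨w, hw, hwc⟩ := exists_lt_of_csInf_lt img_ne hc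
        obtain ⟨s0, hs0, rfl⟩ := hw
        have hev1 : ∀ᶠ s in nhdsWithin 0 (Set.Ici 0), s < s0 :=
          eventually_nhdsWithin_of_eventually_nhds (gt_mem_nhds hs0)
        filter_upwards [hev1, self_mem_nhdsWithin] with s h1 h2
        have h2' : (0:ℝ) ≤ s := h2
        rcases eq_or_lt_of_le h2' with rfl | h
        · rw [g_zero]; exact hc
        · rw [g_pos h]
          calc f s < f s0 := hmono (Set.mem_Ici.2 h.le) (Set.mem_Ici.2 hs0.le) h1
            _ < c := hwc
    have : Tendsto (g f) (nhdsWithin 0 (Set.Ici 0)) (nhds (g f 0)) := by rwa [g_zero]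
    exact this
  · have hev : g f =ᶠ[nhds x] f := by
      filter_upwards [isOpen_Ioi.mem_nhds hx0] with y hy
      exact g_pos hy
    have : ContinuousAt (g f) x :=
      ((fcontOn hconc).continuousAt (isOpen_Ioi.mem_nhds hx0)).congr hev.symm
    exact this.continuousWithinAt




lemma exists_max {N : ℕ} (S : Fin N → ℝ) (hS : ∀ i, 0 ≤ S i) (G : ℝ → ℝ)
    (hGc : ContinuousOn G (Set.Ici 0)) :
    ∃ qh, Feas S qh ∧ ∀ q, Feas S q → ∑ i, G (q i) ≤ ∑ i, G (qh i) := by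
  set B := ∑ i, S i with hB
  set K := {q : Fin N → ℝ | Feas S q} with hK
  have hK0 : (0 : Fin N → ℝ) ∈ K := by
    refine ⟨fun i => le_rfl, fun j => ?_⟩
    simp only [Pi.zero_apply, Finset.sum_const_zero]
    exact Finset.sum_nonneg fun i _ => hS i
  have hKc : IsClosed K := by
    have he : K = (⋂ i, {q : Fin N → ℝ | 0 ≤ q i}) ∩
        ⋂ j, {q : Fin N → ℝ | ∑ k ∈ Iic j, q k ≤ ∑ k ∈ Iic j, S k} := by
      ext q
      simp [hK, Feas, Set.mem_iInter]
    rw [he]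
    refine IsClosed.inter (isClosed_iInter fun i => ?_) (isClosed_iInter fun j => ?_)
    · exact isClosed_le continuous_const (continuous_apply i)
    · exact isClosed_le (continuous_finset_sum _ fun k _ => continuous_apply k) continuous_const
  have hsub : K ⊆ Set.pi Set.univ fun _ : Fin N => Set.Icc (0:ℝ) B := by
    intro q hq i _
    refine ⟨hq.1 i, ?_⟩
    calc q i ≤ ∑ k ∈ Iic i, q k :=
          Finset.single_le_sum (fun k _ => hq.1 k) (Finset.mem_Iic.2 le_rfl)
      _ ≤ ∑ k ∈ Iic i, S k := hq.2 i
      _ ≤ ∑ k, S k := Finset.sum_le_sum_of_subset_of_nonneg (Finset.subset_univ _)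
          (fun k _ _ => hS k)
  have hKcpt : IsCompact K :=
    (isCompact_univ_pi fun _ => isCompact_Icc).of_isClosed_subset hKc hsub
  have hcont : ContinuousOn (fun q : Fin N → ℝ => ∑ i, G (q i)) K := by
    refine continuousOn_finset_sum _ fun i _ => ?_
    exact hGc.comp (continuous_apply i).continuousOn (fun q hq => hq.1 i)
  obtain ⟨qh, hqhK, hmax⟩ := hKcpt.exists_isMaxOn ⟨0, hK0⟩ hcont
  exact ⟨qh, hqhK, fun q hq => hmax hq⟩

lemma g_transfer (G : ℝ → ℝ) (hgs : StrictConcaveOn ℝ (Set.Ici 0) G) {c d : ℝ}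
    (hd : 0 < d) (hdc : d < c) : G 0 + G c < G d + G (c - d) := by
  have hc : 0 < c := lt_trans hd hdc
  have hdc1 : d / c < 1 := (div_lt_one hc).2 hdc
  have hdc0 : 0 < d / c := by positivity
  have h1 := hgs.2 (Set.mem_Ici.2 le_rfl) (Set.mem_Ici.2 hc.le) (ne_of_lt hc)
    (show (0:ℝ) < 1 - d/c by linarith) hdc0 (by ring)
  have h2 := hgs.2 (Set.mem_Ici.2 le_rfl) (Set.mem_Ici.2 hc.le) (ne_of_lt hc)
    hdc0 (show (0:ℝ) < 1 - d/c by linarith) (by ring)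
  simp only [smul_eq_mul, mul_zero, zero_add] at h1 h2
  rw [show (d/c) * c = d by field_simp] at h1
  rw [show (1 - d/c) * c = c - d by field_simp] at h2
  nlinarith [h1, h2]


lemma Tmono {N : ℕ} (S : Fin N → ℝ) (hS : ∀ i, 0 ≤ S i) {a b : Fin N} (hab : a ≤ b) :
    ∑ k ∈ Iic a, S k ≤ ∑ k ∈ Iic b, S k :=
  Finset.sum_le_sum_of_subset_of_nonneg (Finset.Iic_subset_Iic.2 hab) (fun k _ _ => hS k)

lemma pos_of_T_pos {N : ℕ} (S : Fin N → ℝ) (hS : ∀ i, 0 ≤ S i) (G : ℝ → ℝ)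
    (hgs : StrictConcaveOn ℝ (Set.Ici 0) G)
    (hg0lt : ∀ {x : ℝ}, 0 < x → G 0 < G x)
    (qh : Fin N → ℝ) (hf : Feas S qh)
    (hmax : ∀ q, Feas S q → ∑ i, G (q i) ≤ ∑ i, G (qh i))
    (i : Fin N) (hTi : 0 < ∑ k ∈ Iic i, S k) : 0 < qh i := by
  by_contra hpos
  have hqi : qh i = 0 := le_antisymm (not_lt.1 hpos) (hf.1 i)
  by_cases hbind : ∃ j, i ≤ j ∧ ∑ k ∈ Iic j, qh k = ∑ k ∈ Iic j, S k
  · obtain ⟨j, hij, hj⟩ := hbind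
    have hTj : 0 < ∑ k ∈ Iic j, S k := lt_of_lt_of_le hTi (Tmono S hS hij)
    have hsum : 0 < ∑ k ∈ Iic j, qh k := by rw [hj]; exact hTj
    obtain ⟨l, hlj, hl⟩ : ∃ l ∈ Iic j, 0 < qh l := by
      by_contra h
      push_neg at h
      have h0 : ∑ k ∈ Iic j, qh k = 0 :=
        Finset.sum_eq_zero fun k hk => le_antisymm (h k hk) (hf.1 k)
      rw [h0] at hsum
      exact lt_irrefl _ hsum
    set F := (Iic j).filter (fun l => 0 < qh l) with hF
    have hFne : F.Nonempty := ⟨l, Finset.mem_filter.2 ⟨hlj, hl⟩⟩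
    set l0 := F.min' hFne with hl0def
    have hl0mem : l0 ∈ F := F.min'_mem hFne
    rw [hF, Finset.mem_filter] at hl0mem
    obtain ⟨hl0j, hl0pos⟩ := hl0mem
    have hl0j' : l0 ≤ j := Finset.mem_Iic.1 hl0j
    set c := qh l0 with hc
    have hl0i : l0 ≠ i := by
      intro h
      rw [hc, h, hqi] at hl0pos
      exact lt_irrefl _ hl0pos
    rcases lt_or_gt_of_ne hl0i with hcase | hcase
    · -- l0 < i : move d = c/2 from l0 to i
      set d := c/2 with hd
      have hd0 : 0 < d := by rw [hd]; linarith
      set q' := mv qh l0 i d with hq'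
      have hfeas : Feas S q' := by
        constructor
        · intro k
          by_cases h1 : k = l0
          · subst h1
            simp [hq', mv, hl0i, ← hc]
            linarith
          · by_cases h2 : k = i
            · subst h2
              simp [hq', mv, Ne.symm hl0i, hqi]
              linarith
            · simp [hq', mv, h1, h2]
              exact hf.1 k
        · intro m
          rw [hq', sum_mv]
          by_cases h1 : i ≤ m
          · have h2 : l0 ≤ m := le_trans hcase.le h1
            simp only [Finset.mem_Iic, if_pos h1, if_pos h2]
            have := hf.2 m
            linarith
          · by_cases h2 : l0 ≤ m
            · simp only [Finset.mem_Iic, if_neg h1, if_pos h2]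
              have := hf.2 m
              linarith
            · simp only [Finset.mem_Iic, if_neg h1, if_neg h2]
              have := hf.2 m
              linarith
      have hobj : ∑ k, G (qh k) < ∑ k, G (q' k) := by
        rw [hq', sum_comp_mv G qh hl0i d]
        have htr := g_transfer G hgs hd0 (by rw [hd]; linarith : d < c)
        rw [show c - d = d by rw [hd]; ring] at htr
        rw [hqi, ← hc, show c - d = d by rw [hd]; ring]
        rw [show (0:ℝ) + d = d by ring]
        linarith
      exact absurd (hmax q' hfeas) (not_le.2 hobj)
    · -- i < l0
      have hzero : ∀ k : Fin N, k < l0 → qh k = 0 := by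
        intro k hk
        by_contra hne
        have hkpos : 0 < qh k := lt_of_le_of_ne (hf.1 k) (Ne.symm hne)
        have hkj : k ∈ Iic j := Finset.mem_Iic.2 (le_trans hk.le hl0j')
        have hkF : k ∈ F := Finset.mem_filter.2 ⟨hkj, hkpos⟩
        exact absurd (F.min'_le k hkF) (not_le.2 hk)
      set d := min (c/2) (∑ k ∈ Iic i, S k) with hd
      have hd0 : 0 < d := lt_min (by linarith) hTi
      have hdc : d < c := lt_of_le_of_lt (min_le_left _ _) (by linarith)
      set q' := mv qh l0 i d with hq'
      have hfeas : Feas S q' := by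
        constructor
        · intro k
          by_cases h1 : k = l0
          · subst h1
            simp [hq', mv, hl0i, ← hc]
            linarith
          · by_cases h2 : k = i
            · subst h2
              simp [hq', mv, Ne.symm hl0i, hqi]
              linarith
            · simp [hq', mv, h1, h2]
              exact hf.1 k
        · intro m
          rw [hq', sum_mv]
          rcases le_or_gt l0 m with h1 | h1
          · have h2 : i ≤ m := le_trans hcase.le h1
            simp only [Finset.mem_Iic, if_pos h1, if_pos h2]
            have := hf.2 m
            linarith
          · by_cases h2 : i ≤ m
            · have hs0 : ∑ k ∈ Iic m, qh k = 0 :=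
                Finset.sum_eq_zero fun k hk =>
                  hzero k (lt_of_le_of_lt (Finset.mem_Iic.1 hk) h1)
            
              simp only [Finset.mem_Iic, if_pos h2, if_neg (not_le.2 h1)]
              rw [hs0]
              have hdT : d ≤ ∑ k ∈ Iic i, S k := min_le_right _ _
              have := Tmono S hS h2
              linarith
            · have h3 : ¬ l0 ≤ m := fun hl => h2 (le_trans hcase.le hl)
              simp only [Finset.mem_Iic, if_neg h2, if_neg h3]
              have := hf.2 m
              linarith
      have hobj : ∑ k, G (qh k) < ∑ k, G (q' k) := by
        rw [hq', sum_comp_mv G qh hl0i d]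
        have htr := g_transfer G hgs hd0 hdc
        rw [hqi, ← hc, show (0:ℝ) + d = d by ring]
        linarith
      exact absurd (hmax q' hfeas) (not_le.2 hobj)
  · push_neg at hbind
    set ε := (Finset.Ici i).inf' (Finset.nonempty_Ici (a := i))
      (fun j => ∑ k ∈ Iic j, S k - ∑ k ∈ Iic j, qh k) with hε
    have hε0 : 0 < ε := by
      rw [hε, Finset.lt_inf'_iff]
      intro j hj
      have h1 := hf.2 j
      have h2 := hbind j (Finset.mem_Ici.1 hj)
      rcases lt_or_eq_of_le h1 with h | h
      · linarith
      · exact absurd h h2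
    set q' := av qh i ε with hq'
    have hfeas : Feas S q' := by
      constructor
      · intro k
        by_cases h1 : k = i
        · subst h1
          simp [hq', av, hqi]
          linarith
        · simp [hq', av, h1]
          exact hf.1 k
      · intro m
        rw [hq', sum_av]
        by_cases h1 : i ≤ m
        · simp only [Finset.mem_Iic, if_pos h1]
          have h2 : ε ≤ ∑ k ∈ Iic m, S k - ∑ k ∈ Iic m, qh k := by
            rw [hε]
            exact Finset.inf'_le _ (Finset.mem_Ici.2 h1)
          linarith
        · simp only [Finset.mem_Iic, if_neg h1, add_zero]
          exact hf.2 m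
    have hobj : ∑ k, G (qh k) < ∑ k, G (q' k) := by
      rw [hq', sum_comp_av G qh i ε, hqi, show (0:ℝ) + ε = ε by ring]
      have := hg0lt hε0
      linarith
    exact absurd (hmax q' hfeas) (not_le.2 hobj)

end WF

open WF in
/-- Forward waterfilling: the problem of maximizing `∑ f (q i)` under
cumulative causality has a unique optimal solution, and it is nondecreasing. -/
theorem stmt_6 (N : ℕ) (hN : 0 < N)
    (S : Fin N → ℝ) (hS : ∀ i, 0 ≤ S i)
    (f : ℝ → ℝ)
    (hconc : StrictConcaveOn ℝ (Set.Ici 0) f)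
    (hmono : StrictMonoOn f (Set.Ici 0))
    (Opt : (Fin N → ℝ) → Prop)
    (hOpt : ∀ q, Opt q ↔
      ((∀ i, 0 ≤ q i) ∧
        (∀ j : Fin N, ∑ i ∈ Iic j, q i ≤ ∑ i ∈ Iic j, S i)) ∧
      (∀ q' : Fin N → ℝ,
        ((∀ i, 0 ≤ q' i) ∧
          (∀ j : Fin N, ∑ i ∈ Iic j, q' i ≤ ∑ i ∈ Iic j, S i)) →
        ∑ i, f (q' i) ≤ ∑ i, f (q i))) :
    (∃! q, Opt q) ∧ (∀ q, Opt q → Monotone q) := by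
  obtain ⟨n, rfl⟩ : ∃ n, N = n + 1 := ⟨N - 1, by omega⟩
  have hOpt' : ∀ q, Opt q ↔
      (Feas S q ∧ ∀ q', Feas S q' → ∑ i, f (q' i) ≤ ∑ i, f (q i)) := by
    intro q
    exact hOpt q
  obtain ⟨qh, hqhf, hqhmax⟩ := exists_max S hS (g f) (gcont hconc hmono)
  have hpos : ∀ i, 0 < ∑ k ∈ Iic i, S k → 0 < qh i := fun i hTi =>
    pos_of_T_pos S hS (g f) (gstrict hconc hmono) (fun {x} hx => g_zero_lt hmono hx)
      qh hqhf hqhmax i hTi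
  have hopt_f : ∀ q', Feas S q' → ∑ i, f (q' i) ≤ ∑ i, f (qh i) := by
    intro q' hq'
    have key : ∀ k, f (q' k) - f (qh k) ≤ g f (q' k) - g f (qh k) := by
      intro k
      rcases lt_or_ge 0 (qh k) with h | h
      · rw [g_pos h]
        have := f_le_g hmono (hq'.1 k)
        linarith
      · have hqk : qh k = 0 := le_antisymm h (hqhf.1 k)
        have hT0 : ∑ x ∈ Iic k, S x ≤ 0 := by
          by_contra hT
          push_neg at hT
          have := hpos k hT
          rw [hqk] at this
          exact lt_irrefl _ this
        have hq'k : q' k = 0 := by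
          have h1 : q' k ≤ ∑ x ∈ Iic k, q' x :=
            Finset.single_le_sum (fun x _ => hq'.1 x) (Finset.mem_Iic.2 le_rfl)
          have h2 := hq'.2 k
          have h3 := hq'.1 k
          linarith
        rw [hqk, hq'k]
        simp
    have hsum : ∑ k, (f (q' k) - f (qh k)) ≤ ∑ k, (g f (q' k) - g f (qh k)) :=
      Finset.sum_le_sum (fun k _ => key k)
    rw [Finset.sum_sub_distrib, Finset.sum_sub_distrib] at hsum
    have := hqhmax q' hq'
    linarith
  have hOptqh : Opt qh := (hOpt' qh).2 ⟨hqhf, hopt_f⟩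
  constructor
  · refine ⟨qh, hOptqh, ?_⟩
    intro q hq
    obtain ⟨hqf, hqopt⟩ := (hOpt' q).1 hq
    exact opt_unique S f hconc q qh hqf hqhf hqopt hopt_f
  · intro q hq
    obtain ⟨hqf, hqopt⟩ := (hOpt' q).1 hq
    exact mono_of_opt S f hconc q hqf hqopt
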